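/- Pushouts along strict order embeddings in Posets are preserved by the forgetful functor to Set: if f : P₀ → P₁ is a strict order embedding and g : P₀ → P₂ is monotone, then the underlying square of functions of the poset pushout of (f, g) is a pushout in Set. -/

import Mathlib

open CategoryTheory Limits

/-- A strict order embedding: a monotone map reflecting the order such that
every element lying between two images is itself an image. -/
def StrictOrderEmbedding {P P' : Type} [PartialOrder P] [PartialOrder P']
    (f : P → P') : Prop :=
  Monotone f ∧ (∀ x y : P, x ≤ y ↔ f x ≤ f y) ∧
    (∀ x y : P, ∀ z' : P', f x ≤ z' → z' ≤ f y → ∃ z : P, f z = z')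

/-- The underlying monotone map of a morphism of posets. -/
def homFn {X Y : PartOrd} (f : X ⟶ Y) : X →o Y := f.hom

/-- A morphism of posets that is a strict order embedding. -/
def IsM {X Y : PartOrd} (f : X ⟶ Y) : Prop := StrictOrderEmbedding ⇑(homFn f)

namespace Stmt14Aux

/-- Carrier of the explicit pushout: `C` plus the part of `B` outside the image of `f`. -/
inductive Q (C : Type) {A B : Type} (f : A → B) : Type
  | inl : C → Q C f
  | inr : {b : B // ∀ x, f x ≠ b} → Q C f

/-- Eliminator for `Q`. -/
def qelim {A B C : Type} {f : A → B} {T : Type}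
    (k₂ : C → T) (k₁ : {b : B // ∀ x, f x ≠ b} → T) : Q C f → T
  | .inl c => k₂ c
  | .inr b => k₁ b

variable {A B C : Type} [PartialOrder A] [PartialOrder B] [PartialOrder C]

/-- The pushout order relation. -/
def qle (f : A → B) (g : A → C) : Q C f → Q C f → Prop
  | .inl c, .inl c' => c ≤ c'
  | .inl c, .inr b => ∃ x, c ≤ g x ∧ f x ≤ b.1
  | .inr b, .inl c => ∃ x, b.1 ≤ f x ∧ g x ≤ c
  | .inr b, .inr b' => b.1 ≤ b'.1 ∨ ∃ x y, b.1 ≤ f x ∧ g x ≤ g y ∧ f y ≤ b'.1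

/-- The explicit pushout is a partial order when `f` is a strict order embedding
and `g` is monotone. -/
def qPO (f : A → B) (g : A → C) (hg : Monotone g)
    (hr : ∀ x y : A, x ≤ y ↔ f x ≤ f y)
    (hb : ∀ x y : A, ∀ z' : B, f x ≤ z' → z' ≤ f y → ∃ z : A, f z = z') :
    PartialOrder (Q C f) where
  le := qle f g
  le_refl u := by
    cases u with
    | inl c => exact le_refl c
    | inr b => exact Or.inl le_rfl
  le_trans u v w huv hvw := by
    cases u with
    | inl c =>
      cases v with
      | inl c' =>
        cases w with
        | inl c'' => exact le_trans (α := C) huv hvw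
        | inr b =>
          obtain ⟨x, h1, h2⟩ : ∃ x, c' ≤ g x ∧ f x ≤ b.1 := hvw
          exact ⟨x, le_trans (α := C) huv h1, h2⟩
      | inr b =>
        obtain ⟨x, h1, h2⟩ : ∃ x, c ≤ g x ∧ f x ≤ b.1 := huv
        cases w with
        | inl c'' =>
          obtain ⟨y, h3, h4⟩ : ∃ y, b.1 ≤ f y ∧ g y ≤ c'' := hvw
          obtain ⟨z, hz⟩ := hb x y b.1 h2 h3
          exact absurd hz (b.2 z)
        | inr b' =>
          obtain h | ⟨y, z, h3, h4, h5⟩ :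
              b.1 ≤ b'.1 ∨ ∃ y z, b.1 ≤ f y ∧ g y ≤ g z ∧ f z ≤ b'.1 := hvw
          · exact ⟨x, h1, le_trans h2 h⟩
          · obtain ⟨w', hw'⟩ := hb x y b.1 h2 h3
            exact absurd hw' (b.2 w')
    | inr b =>
      cases v with
      | inl c =>
        obtain ⟨x, h1, h2⟩ : ∃ x, b.1 ≤ f x ∧ g x ≤ c := huv
        cases w with
        | inl c' => exact ⟨x, h1, le_trans h2 hvw⟩
        | inr b' =>
          obtain ⟨y, h3, h4⟩ : ∃ y, c ≤ g y ∧ f y ≤ b'.1 := hvw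
          exact Or.inr ⟨x, y, h1, le_trans h2 h3, h4⟩
      | inr b' =>
        have huv' : b.1 ≤ b'.1 ∨ ∃ x y, b.1 ≤ f x ∧ g x ≤ g y ∧ f y ≤ b'.1 := huv
        cases w with
        | inl c =>
          obtain ⟨z, hz1, hz2⟩ : ∃ z, b'.1 ≤ f z ∧ g z ≤ c := hvw
          rcases huv' with h | ⟨x, y, h1, h2, h3⟩
          · exact ⟨z, le_trans h hz1, hz2⟩
          · exact ⟨x, h1, le_trans h2 (le_trans (hg ((hr y z).2 (le_trans h3 hz1))) hz2)⟩
        | inr b'' =>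
          have hvw' : b'.1 ≤ b''.1 ∨ ∃ x y, b'.1 ≤ f x ∧ g x ≤ g y ∧ f y ≤ b''.1 := hvw
          rcases huv' with h | ⟨x, y, h1, h2, h3⟩
          · rcases hvw' with h' | ⟨x', y', h1', h2', h3'⟩
            · exact Or.inl (le_trans h h')
            · exact Or.inr ⟨x', y', le_trans h h1', h2', h3'⟩
          · rcases hvw' with h' | ⟨x', y', h1', h2', h3'⟩
            · exact Or.inr ⟨x, y, h1, h2, le_trans h3 h'⟩
            · obtain ⟨z, hz⟩ := hb y x' b'.1 h3 h1'
              exact absurd hz (b'.2 z)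
  le_antisymm u v huv hvu := by
    cases u with
    | inl c =>
      cases v with
      | inl c' => exact congrArg Q.inl (le_antisymm (α := C) huv hvu)
      | inr b =>
        obtain ⟨x, h1, h2⟩ : ∃ x, c ≤ g x ∧ f x ≤ b.1 := huv
        obtain ⟨y, h3, h4⟩ : ∃ y, b.1 ≤ f y ∧ g y ≤ c := hvu
        obtain ⟨z, hz⟩ := hb x y b.1 h2 h3
        exact absurd hz (b.2 z)
    | inr b =>
      cases v with
      | inl c =>
        obtain ⟨x, h1, h2⟩ : ∃ x, b.1 ≤ f x ∧ g x ≤ c := huv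
        obtain ⟨y, h3, h4⟩ : ∃ y, c ≤ g y ∧ f y ≤ b.1 := hvu
        obtain ⟨z, hz⟩ := hb y x b.1 h4 h1
        exact absurd hz (b.2 z)
      | inr b' =>
        have huv' : b.1 ≤ b'.1 ∨ ∃ x y, b.1 ≤ f x ∧ g x ≤ g y ∧ f y ≤ b'.1 := huv
        have hvu' : b'.1 ≤ b.1 ∨ ∃ x y, b'.1 ≤ f x ∧ g x ≤ g y ∧ f y ≤ b.1 := hvu
        rcases huv' with h | ⟨x, y, h1, h2, h3⟩
        · rcases hvu' with h' | ⟨x', y', h1', h2', h3'⟩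
          · exact congrArg Q.inr (Subtype.ext (le_antisymm h h'))
          · obtain ⟨z, hz⟩ := hb y' x' b.1 h3' (le_trans h h1')
            exact absurd hz (b.2 z)
        · rcases hvu' with h' | ⟨x', y', h1', h2', h3'⟩
          · obtain ⟨z, hz⟩ := hb y x b'.1 h3 (le_trans h' h1)
            exact absurd hz (b'.2 z)
          · obtain ⟨z, hz⟩ := hb y x' b'.1 h3 h1'
            exact absurd hz (b'.2 z)

open Classical in
/-- The map from `B` to the explicit pushout. -/
noncomputable def h1fn (f : A → B) (g : A → C) (b : B) : Q C f :=
  if h : ∃ x, f x = b then .inl (g h.choose)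
  else .inr ⟨b, fun x hx => h ⟨x, hx⟩⟩

theorem h1fn_f (f : A → B) (g : A → C) (hinj : Function.Injective f) (x : A) :
    h1fn f g (f x) = Q.inl (g x) := by
  have h : ∃ y, f y = f x := ⟨x, rfl⟩
  rw [h1fn, dif_pos h]
  exact congrArg (fun a => Q.inl (f := f) (g a)) (hinj h.choose_spec)

theorem uQ_h1fn (f : A → B) (g : A → C) {T : Type} (k₁ : B → T) (k₂ : C → T)
    (hc : ∀ x, k₁ (f x) = k₂ (g x)) (b : B) :
    qelim k₂ (fun b' : {b : B // ∀ x, f x ≠ b} => k₁ b'.1) (h1fn f g b) = k₁ b := by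
  rw [h1fn]
  split_ifs with h
  · exact (hc h.choose).symm.trans (congrArg k₁ h.choose_spec)
  · rfl

end Stmt14Aux

open Stmt14Aux in
/-- Pushouts along strict order embeddings in the category of posets are
preserved by the forgetful functor to sets. -/
theorem stmt_14 {P₀ P₁ P₂ P₃ : PartOrd} (f : P₀ ⟶ P₁) (g : P₀ ⟶ P₂)
    (g' : P₁ ⟶ P₃) (f' : P₂ ⟶ P₃)
    (hpo : IsPushout f g g' f') (hf : IsM f) :
    IsPushout ((forget PartOrd).map f) ((forget PartOrd).map g)
      ((forget PartOrd).map g') ((forget PartOrd).map f') := by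
  obtain ⟨hmf, hr, hb⟩ := hf
  set F : ↥P₀ → ↥P₁ := ⇑(homFn f) with hF
  set G : ↥P₀ → ↥P₂ := ⇑(homFn g) with hG
  have hinj : Function.Injective F := fun x y h =>
    le_antisymm ((hr x y).2 h.le) ((hr y x).2 h.ge)
  letI instQ : PartialOrder (Q ↥P₂ F) := qPO F G (homFn g).monotone hr hb
  let QP : PartOrd := PartOrd.of (Q ↥P₂ F)
  -- the two legs of the explicit cocone
  have h1mono : Monotone (h1fn F G) := by
    intro b b' hbb'
    show qle F G (h1fn F G b) (h1fn F G b')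
    unfold h1fn
    split_ifs with hx hy hy
    · exact (homFn g).monotone ((hr _ _).2
        (by rw [hx.choose_spec, hy.choose_spec]; exact hbb'))
    · exact ⟨hx.choose, le_rfl, by rw [hx.choose_spec]; exact hbb'⟩
    · exact ⟨hy.choose, by rw [hy.choose_spec]; exact hbb', le_rfl⟩
    · exact Or.inl hbb'
  have h2mono : Monotone (Q.inl : ↥P₂ → Q ↥P₂ F) := fun _ _ h => h
  let h₁ : P₁ ⟶ QP := ConcreteCategory.ofHom (C := PartOrd) (⟨h1fn F G, h1mono⟩ : ↥P₁ →o ↥QP)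
  let h₂ : P₂ ⟶ QP := ConcreteCategory.ofHom (C := PartOrd) (⟨Q.inl, h2mono⟩ : ↥P₂ →o ↥QP)
  have hsq : f ≫ h₁ = g ≫ h₂ := by
    apply PartOrd.hom_ext
    apply OrderHom.ext
    funext x
    exact h1fn_f F G hinj x
  let φ : P₃ ⟶ QP := hpo.desc h₁ h₂ hsq
  -- the comparison map back
  have hw' : ∀ x, homFn g' (F x) = homFn f' (G x) := fun x =>
    congrFun (congrArg (fun (h : P₀ ⟶ P₃) => ⇑(homFn h)) hpo.w) x
  have ψmono : Monotone (qelim ⇑(homFn f')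
      (fun b : {b : ↥P₁ // ∀ x, F x ≠ b} => homFn g' b.1) : Q ↥P₂ F → ↥P₃) := by
    intro u v huv
    cases u with
    | inl c =>
      cases v with
      | inl c' => exact (homFn f').monotone huv
      | inr b =>
        obtain ⟨x, h1, h2⟩ : ∃ x, c ≤ G x ∧ F x ≤ b.1 := huv
        calc homFn f' c ≤ homFn f' (G x) := (homFn f').monotone h1
          _ = homFn g' (F x) := (hw' x).symm
          _ ≤ homFn g' b.1 := (homFn g').monotone h2
    | inr b =>
      cases v with
      | inl c =>
        obtain ⟨x, h1, h2⟩ : ∃ x, b.1 ≤ F x ∧ G x ≤ c := huv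
        calc homFn g' b.1 ≤ homFn g' (F x) := (homFn g').monotone h1
          _ = homFn f' (G x) := hw' x
          _ ≤ homFn f' c := (homFn f').monotone h2
      | inr b' =>
        have huv' : b.1 ≤ b'.1 ∨ ∃ x y, b.1 ≤ F x ∧ G x ≤ G y ∧ F y ≤ b'.1 := huv
        rcases huv' with h | ⟨x, y, h1, h2, h3⟩
        · exact (homFn g').monotone h
        · calc homFn g' b.1 ≤ homFn g' (F x) := (homFn g').monotone h1
            _ = homFn f' (G x) := hw' x
            _ ≤ homFn f' (G y) := (homFn f').monotone h2
            _ = homFn g' (F y) := (hw' y).symm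
            _ ≤ homFn g' b'.1 := (homFn g').monotone h3
  let ψ : QP ⟶ P₃ := ConcreteCategory.ofHom (C := PartOrd) (⟨qelim ⇑(homFn f')
      (fun b : {b : ↥P₁ // ∀ x, F x ≠ b} => homFn g' b.1), ψmono⟩ : ↥QP →o ↥P₃)
  have hφg' : ∀ b, homFn φ (homFn g' b) = h1fn F G b := fun b =>
    congrFun (congrArg (fun (h : P₁ ⟶ QP) => ⇑(homFn h)) (hpo.inl_desc h₁ h₂ hsq)) b
  have hφf' : ∀ c, homFn φ (homFn f' c) = Q.inl c := fun c =>
    congrFun (congrArg (fun (h : P₂ ⟶ QP) => ⇑(homFn h)) (hpo.inr_desc h₁ h₂ hsq)) c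
  have hψh1 : ∀ b, homFn ψ (h1fn F G b) = homFn g' b := fun b =>
    uQ_h1fn F G ⇑(homFn g') ⇑(homFn f') hw' b
  have hψφ : φ ≫ ψ = 𝟙 P₃ := by
    apply hpo.hom_ext
    · apply PartOrd.hom_ext
      apply OrderHom.ext
      funext b
      show homFn ψ (homFn φ (homFn g' b)) = homFn g' b
      rw [hφg']
      exact hψh1 b
    · apply PartOrd.hom_ext
      apply OrderHom.ext
      funext c
      show homFn ψ (homFn φ (homFn f' c)) = homFn f' c
      rw [hφf']
      rfl
  have hψφ' : ∀ p : ↥P₃, homFn ψ (homFn φ p) = p := fun p =>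
    congrFun (congrArg (fun (h : P₃ ⟶ P₃) => ⇑(homFn h)) hψφ) p
  -- joint surjectivity
  have hjs : ∀ p : ↥P₃, (∃ b, homFn g' b = p) ∨ (∃ c, homFn f' c = p) := by
    intro p
    rcases hq : (homFn φ p : Q ↥P₂ F) with c | b
    · right
      refine ⟨c, ?_⟩
      have := hψφ' p
      rw [hq] at this
      exact this
    · left
      refine ⟨b.1, ?_⟩
      have := hψφ' p
      rw [hq] at this
      exact this
  -- now the Type-level pushout
  have hw : (forget PartOrd).map f ≫ (forget PartOrd).map g' =
      (forget PartOrd).map g ≫ (forget PartOrd).map f' := by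
    rw [← Functor.map_comp, ← Functor.map_comp, hpo.w]
  refine IsPushout.of_isColimit' ⟨hw⟩
    (PushoutCocone.IsColimit.mk hw
      (fun s => TypeCat.ofHom fun p => qelim s.inr (fun b : {b : ↥P₁ // ∀ x, F x ≠ b} => s.inl b.1) (homFn φ p))
      (fun s => ?_) (fun s => ?_) (fun s m hm₁ hm₂ => ?_))
  · apply ConcreteCategory.hom_ext; intro b
    show qelim s.inr _ (homFn φ (homFn g' b)) = s.inl b
    rw [hφg']
    exact uQ_h1fn F G s.inl s.inr (fun x => types_congr_hom s.condition x) b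
  · apply ConcreteCategory.hom_ext; intro c
    show qelim s.inr _ (homFn φ (homFn f' c)) = s.inr c
    rw [hφf']
    rfl
  · apply ConcreteCategory.hom_ext; intro p
    rcases hjs p with ⟨b, rfl⟩ | ⟨c, rfl⟩
    · show m (homFn g' b) = qelim s.inr _ (homFn φ (homFn g' b))
      rw [hφg', uQ_h1fn F G s.inl s.inr (fun x => types_congr_hom s.condition x) b]
      exact types_congr_hom hm₁ b
    · show m (homFn f' c) = qelim s.inr _ (homFn φ (homFn f' c))
      rw [hφf']
      show m (homFn f' c) = s.inr c
      exact types_congr_hom hm₂ c
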